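/- For hypergraphs H = ({1,…,n}, E) and H' = ({1,…,m}, E'): H ⪯ H' (there is a quotient map from H' to H) if and only if f_H ≤ f_{H'} (f_H is a simple minor of f_{H'}). -/

import Mathlib

open Classical

/-- Boolean functions of arity `n` over GF(2). -/
abbrev BFn (n : ℕ) := (Fin n → ZMod 2) → ZMod 2

/-- Boolean functions of arbitrary arity. -/
abbrev BF := Σ n : ℕ, BFn n

/-- `g` is a simple minor of `f`. -/
def Minor {m n : ℕ} (g : BFn m) (f : BFn n) : Prop :=
  ∃ σ : Fin n → Fin m, ∀ a : Fin m → ZMod 2, g a = f (fun i => a (σ i))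

def MinorS (G F : BF) : Prop := Minor G.2 F.2

def EquivS (G F : BF) : Prop := MinorS G F ∧ MinorS F G

def StrictMinorS (G F : BF) : Prop := MinorS G F ∧ ¬ MinorS F G

/-- `x i` is an essential variable of `f`. -/
def Essential {n : ℕ} (f : BFn n) (i : Fin n) : Prop :=
  ∃ a b : Fin n → ZMod 2, (∀ j, j ≠ i → a j = b j) ∧ f a ≠ f b

noncomputable def essArity {n : ℕ} (f : BFn n) : ℕ :=
  (Finset.univ.filter fun i => Essential f i).card

noncomputable def essS (F : BF) : ℕ := essArity F.2

/-- `f_{i=j}` : identify variable `i` with variable `j`. -/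
def identify {n : ℕ} (f : BFn n) (i j : Fin n) : BFn n :=
  fun a => f (fun t => if t = i then a j else a t)

/-- `G` is a lower cover of `F` in the poset of equivalence classes. -/
def LowerCover (G F : BF) : Prop :=
  StrictMinorS G F ∧ ¬ ∃ H : BF, StrictMinorS G H ∧ StrictMinorS H F

/-- `F` is join-irreducible: some strict minor dominates all strict minors. -/
def JoinIrred (F : BF) : Prop :=
  ∃ F' : BF, StrictMinorS F' F ∧ ∀ G : BF, StrictMinorS G F → MinorS G F'

noncomputable def arityGap (F : BF) : ℕ :=
  sInf {d : ℕ | ∃ G : BF, StrictMinorS G F ∧ d = essS F - essS G}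

/-- Hypergraphs on vertex set `Fin n`. -/
abbrev HG (n : ℕ) := Finset (Finset (Fin n))

abbrev HGS := Σ n : ℕ, HG n

/-- `h` is a quotient map from `(Fin m, E')` to `(Fin n, E)`. -/
def IsQuotientMap {m n : ℕ} (E' : HG m) (E : HG n) (h : Fin m → Fin n) : Prop :=
  ∀ S : Finset (Fin n), S ∈ E ↔ Odd (E'.filter (fun T => T.image h = S)).card

/-- `H ⪯ H'` : there is a quotient map from `H'` to `H`. -/
def MinorH (H H' : HGS) : Prop :=
  ∃ h : Fin H'.1 → Fin H.1, IsQuotientMap H'.2 H.2 h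

/-- The hypergraph `H_{h'}` determined by a hypergraph and a map. -/
noncomputable def quotientHG {m n : ℕ} (E' : HG m) (h : Fin m → Fin n) : HG n :=
  Finset.univ.filter fun S => Odd (E'.filter (fun T => T.image h = S)).card

/-- The Boolean function of a hypergraph: evaluation of `Σ_{E} Π_{i ∈ E} x_i`. -/
def fHG {n : ℕ} (E : HG n) : BFn n :=
  fun a => ∑ S ∈ E, ∏ i ∈ S, a i

/-- A Steiner system (`2-(n,k,1)` design). -/
def IsSteiner {n : ℕ} (k : ℕ) (E : HG n) : Prop :=
  (∀ S ∈ E, S.card = k) ∧ ∀ i j : Fin n, i ≠ j → ∃! S, S ∈ E ∧ i ∈ S ∧ j ∈ S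

/-- Vertex set of the identification hypergraph `H_e`, `e = {i,j}`:
`(V \ e) ∪ {l_e}` where `none` plays the role of the new vertex `l_e`. -/
abbrev IdVert {n : ℕ} (i j : Fin n) := Option {x : Fin n // x ≠ i ∧ x ≠ j}

/-- The underlying subset of `V` of a set of vertices of `H_e` (ignoring `l_e`). -/
def baseSet {n : ℕ} {i j : Fin n} (E : Finset (IdVert i j)) : Finset (Fin n) :=
  E.biUnion fun o => o.elim ∅ fun x => {x.val}

/-- Exactly one or all three of `p`, `q`, `r` hold. -/
def OneOrAllThree (p q r : Prop) : Prop :=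
  (p ∧ ¬q ∧ ¬r) ∨ (¬p ∧ q ∧ ¬r) ∨ (¬p ∧ ¬q ∧ r) ∨ (p ∧ q ∧ r)

/-- The hyperedges of the identification hypergraph `H_e`, `e = {i,j}`. -/
noncomputable def idEdges {n : ℕ} (𝓔 : HG n) (i j : Fin n) :
    Finset (Finset (IdVert i j)) :=
  Finset.univ.filter fun E =>
    (none ∉ E ∧ baseSet E ∈ 𝓔) ∨
    (none ∈ E ∧ OneOrAllThree (insert i (insert j (baseSet E)) ∈ 𝓔)
      (insert i (baseSet E) ∈ 𝓔) (insert j (baseSet E) ∈ 𝓔))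

/-- The hyperedges of the induced hypergraph `H_{-e}` on `V \ e`, `e = {i,j}`. -/
noncomputable def minusEdges {n : ℕ} (𝓔 : HG n) (i j : Fin n) :
    Finset (Finset {x : Fin n // x ≠ i ∧ x ≠ j}) :=
  Finset.univ.filter fun E => E.image Subtype.val ∈ 𝓔

/-- `φ` is an isomorphism of hypergraphs. -/
def IsHGIso {α β : Type*} (𝓐 : Finset (Finset α)) (𝓑 : Finset (Finset β))
    (φ : α ≃ β) : Prop :=
  ∀ E : Finset α, E ∈ 𝓐 ↔ E.image φ ∈ 𝓑

/-- The (loopless) graph associated with a set of 2-element edges. -/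
def graphOf {n : ℕ} (𝓔 : HG n) : SimpleGraph (Fin n) where
  Adj v w := v ≠ w ∧ ({v, w} : Finset (Fin n)) ∈ 𝓔
  symm := by
    refine ⟨?_⟩
    intro v w h
    exact ⟨h.1.symm, by rw [Finset.pair_comm]; exact h.2⟩
  loopless := by
    refine ⟨?_⟩
    intro v h
    exact h.1 rfl
lemma natCast_zmod2 (k : ℕ) : ((k : ZMod 2)) = if Odd k then 1 else 0 := by
  rcases Nat.mod_two_eq_zero_or_one k with h | h
  · rw [if_neg (by simp [Nat.odd_iff, h]), ← ZMod.natCast_mod, h]; simp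
  · rw [if_pos (Nat.odd_iff.mpr h), ← ZMod.natCast_mod, h]; simp

lemma prod_image_zmod2 {m n : ℕ} (h : Fin m → Fin n) (a : Fin n → ZMod 2)
    (T : Finset (Fin m)) : ∏ i ∈ T, a (h i) = ∏ j ∈ T.image h, a j := by
  by_cases hz : ∃ j ∈ T.image h, a j = 0
  · obtain ⟨j, hjm, hj0⟩ := hz
    obtain ⟨i, hiT, hij⟩ := Finset.mem_image.mp hjm
    rw [Finset.prod_eq_zero hiT (by rw [hij]; exact hj0),
        Finset.prod_eq_zero hjm hj0]
  · push_neg at hz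
    have h1 : ∀ j ∈ T.image h, a j = 1 := by
      intro j hj
      have := hz j hj
      revert this
      generalize a j = x
      revert x; decide
    rw [Finset.prod_eq_one h1,
        Finset.prod_eq_one (fun i hi => h1 _ (Finset.mem_image_of_mem h hi))]

lemma comp_eq {m n : ℕ} (E' : HG m) (h : Fin m → Fin n) (a : Fin n → ZMod 2) :
    fHG E' (fun i => a (h i)) = fHG (quotientHG E' h) a := by
  unfold fHG quotientHG
  calc ∑ T ∈ E', ∏ i ∈ T, a (h i)
      = ∑ T ∈ E', ∏ j ∈ T.image h, a j :=
        Finset.sum_congr rfl (fun T _ => prod_image_zmod2 h a T)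
    _ = ∑ S ∈ (Finset.univ : Finset (Finset (Fin n))),
          ∑ T ∈ E'.filter (fun T => T.image h = S), ∏ j ∈ T.image h, a j :=
        (Finset.sum_fiberwise_of_maps_to (fun T _ => Finset.mem_univ _) _).symm
    _ = ∑ S ∈ (Finset.univ : Finset (Finset (Fin n))),
          ∑ T ∈ E'.filter (fun T => T.image h = S), ∏ j ∈ S, a j := by
        refine Finset.sum_congr rfl fun S _ => Finset.sum_congr rfl fun T hT => ?_
        rw [(Finset.mem_filter.mp hT).2]
    _ = ∑ S ∈ (Finset.univ : Finset (Finset (Fin n))),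
          ((E'.filter (fun T => T.image h = S)).card : ZMod 2) * ∏ j ∈ S, a j := by
        simp [Finset.sum_const, nsmul_eq_mul]
    _ = ∑ S ∈ Finset.univ.filter
          (fun S => Odd (E'.filter (fun T => T.image h = S)).card), ∏ j ∈ S, a j := by
        rw [Finset.sum_filter]
        refine Finset.sum_congr rfl fun S _ => ?_
        rw [natCast_zmod2]
        split <;> simp

lemma fHG_chi {n : ℕ} (E : HG n) (S : Finset (Fin n)) :
    fHG E (fun i => if i ∈ S then 1 else 0) =
      ((E.filter (fun T => T ⊆ S)).card : ZMod 2) := by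
  unfold fHG
  rw [← Finset.sum_boole]
  refine Finset.sum_congr rfl fun T _ => ?_
  by_cases hTS : T ⊆ S
  · rw [if_pos hTS]
    exact Finset.prod_eq_one fun i hi => if_pos (hTS hi)
  · rw [if_neg hTS]
    obtain ⟨i, hiT, hiS⟩ := Finset.not_subset.mp hTS
    exact Finset.prod_eq_zero hiT (if_neg hiS)

lemma fHG_inj {n : ℕ} (E₁ E₂ : HG n) (heq : ∀ a, fHG E₁ a = fHG E₂ a) :
    E₁ = E₂ := by
  have key : ∀ S : Finset (Fin n), S ∈ E₁ ↔ S ∈ E₂ := by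
    refine Finset.strongInduction fun S ih => ?_
    · have hcard : ((E₁.filter (fun T => T ⊆ S)).card : ZMod 2) =
          ((E₂.filter (fun T => T ⊆ S)).card : ZMod 2) := by
        rw [← fHG_chi, ← fHG_chi]; exact heq _
      have hsplit : ∀ E : HG n, E.filter (fun T => T ⊆ S) =
          E.filter (fun T => T ⊂ S) ∪ E.filter (fun T => T = S) := by
        intro E
        rw [← Finset.filter_or]
        exact Finset.filter_congr fun T _ => by
          constructor
          · intro hTS
            by_cases hTe : T = S
            · exact Or.inr hTe
            · exact Or.inl (Finset.ssubset_iff_subset_ne.mpr ⟨hTS, hTe⟩)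
          · rintro (h | rfl)
            · exact h.subset
            · exact subset_rfl
      have hdisj : ∀ E : HG n,
          Disjoint (E.filter (fun T => T ⊂ S)) (E.filter (fun T => T = S)) := by
        intro E
        refine Finset.disjoint_left.mpr fun U h1 h2 => ?_
        have ha := (Finset.mem_filter.mp h1).2
        have hb := (Finset.mem_filter.mp h2).2
        rw [hb] at ha
        exact lt_irrefl _ ha
      have hproper : E₁.filter (fun T => T ⊂ S) = E₂.filter (fun T => T ⊂ S) := by
        ext T
        simp only [Finset.mem_filter]
        constructor
        · rintro ⟨hm, hs⟩; exact ⟨(ih T hs).mp hm, hs⟩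
        · rintro ⟨hm, hs⟩; exact ⟨(ih T hs).mpr hm, hs⟩
      rw [hsplit E₁, hsplit E₂, Finset.card_union_of_disjoint (hdisj E₁),
          Finset.card_union_of_disjoint (hdisj E₂), hproper,
          Finset.filter_eq' E₁ S, Finset.filter_eq' E₂ S] at hcard
      push_cast at hcard
      have h2 : ((if S ∈ E₁ then ({S} : Finset (Finset (Fin n))) else ∅).card : ZMod 2) =
          ((if S ∈ E₂ then ({S} : Finset (Finset (Fin n))) else ∅).card : ZMod 2) := by
        exact add_left_cancel hcard
      by_cases h1 : S ∈ E₁ <;> by_cases hb : S ∈ E₂ <;>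
        simp only [h1, hb, if_true, if_false, Finset.card_singleton,
          Finset.card_empty, Nat.cast_one, Nat.cast_zero, iff_true, iff_false,
          not_true, not_false_iff] at h2 ⊢ <;>
        exact absurd h2 (by decide)
  exact Finset.ext key

lemma mem_quotientHG {m n : ℕ} (E' : HG m) (h : Fin m → Fin n)
    (S : Finset (Fin n)) : S ∈ quotientHG E' h ↔
      Odd (E'.filter (fun T => T.image h = S)).card := by
  simp [quotientHG]

/-- `H ⪯ H'` iff `f_H ≤ f_{H'}`. -/
theorem stmt13 (H H' : HGS) : MinorH H H' ↔ Minor (fHG H.2) (fHG H'.2) := by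
  constructor
  · rintro ⟨h, hq⟩
    refine ⟨h, fun a => ?_⟩
    have hEq : quotientHG H'.2 h = H.2 :=
      Finset.ext fun S => by rw [mem_quotientHG]; exact (hq S).symm
    rw [comp_eq H'.2 h a, hEq]
  · rintro ⟨σ, hσ⟩
    refine ⟨σ, fun S => ?_⟩
    have hEq : H.2 = quotientHG H'.2 σ :=
      fHG_inj _ _ fun a => (hσ a).trans (comp_eq H'.2 σ a)
    rw [hEq, mem_quotientHG]
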